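/- Let P be a non-empty closed convex set of BCEs. The following are equivalent: (i) sBCE ∩ P is dense in P; (ii) there exists a P-minimally mixed separated BCE; (iii) for all p ∈ P, players i, and actions a_i, b_i ∈ supp_i(p), p_{a_i} ≠ p_{b_i} implies J_P(a_i) ∩ J_P(b_i) = ∅, where J_P(c_i) = ∩{BR(q_{c_i}) : q ∈ P, c_i ∈ supp_i(q)} is the set of actions that P-jeopardize c_i. -/

import Mathlib

open Finset

variable {I : Type} [Fintype I] [DecidableEq I]
  {A : I → Type} [∀ i, Fintype (A i)] [∀ i, DecidableEq (A i)]
  {Θ : Type} [Fintype Θ]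

/-- The marginal probability that player `i` plays `ai` under outcome `p`. -/
noncomputable def marg (p : ((∀ j, A j) × Θ) → ℝ) (i : I) (ai : A i) : ℝ :=
  ∑ x : (∀ j, A j) × Θ, if x.1 i = ai then p x else 0

/-- The conditional belief of player `i` given recommendation `ai`, represented
as a function on full profile-state pairs that ignores the `i`-th coordinate
(it is overridden by `ai`).  It is the zero function if `marg p i ai = 0`. -/
noncomputable def condBelief (p : ((∀ j, A j) × Θ) → ℝ) (i : I) (ai : A i) :
    ((∀ j, A j) × Θ) → ℝ :=
  fun x => p (Function.update x.1 i ai, x.2) / marg p i ai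

/-- Expected utility for player `i` of playing `ci` against belief `μ`. -/
noncomputable def dev (u : ((∀ j, A j) × Θ) → ℝ) (i : I) (ci : A i)
    (μ : ((∀ j, A j) × Θ) → ℝ) : ℝ :=
  ∑ x : (∀ j, A j) × Θ, u (Function.update x.1 i ci, x.2) * μ x

/-- Best responses of player `i` (with utility `u`) to belief `μ`. -/
noncomputable def BRset (u : ((∀ j, A j) × Θ) → ℝ) (i : I)
    (μ : ((∀ j, A j) × Θ) → ℝ) : Set (A i) :=
  {ci | ∀ di : A i, dev u i di μ ≤ dev u i ci μ}

/-- The obedience constraint defining a Bayes correlated equilibrium. -/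
def Obedient (u : ∀ i : I, ((∀ j, A j) × Θ) → ℝ) (p : ((∀ j, A j) × Θ) → ℝ) : Prop :=
  ∀ i : I, ∀ ai bi : A i,
    0 ≤ ∑ x : (∀ j, A j) × Θ,
      (if x.1 i = ai then (u i x - u i (Function.update x.1 i bi, x.2)) * p x else 0)

/-- The separation constraint: recommendations inducing distinct beliefs have
disjoint best-response sets. -/
def Separated (u : ∀ i : I, ((∀ j, A j) × Θ) → ℝ) (p : ((∀ j, A j) × Θ) → ℝ) : Prop :=
  ∀ i : I, ∀ ai bi : A i, 0 < marg p i ai → 0 < marg p i bi →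
    condBelief p i ai ≠ condBelief p i bi →
    BRset (u i) i (condBelief p i ai) ∩ BRset (u i) i (condBelief p i bi) = ∅

/-- `p` is an outcome with `Θ`-marginal `π`. -/
def IsOutcome (π : Θ → ℝ) (p : ((∀ j, A j) × Θ) → ℝ) : Prop :=
  (∀ x, 0 ≤ p x) ∧ ∀ θ, (∑ a : ∀ j, A j, p (a, θ)) = π θ

/-- `p` is `P`-minimally mixed: it has `P`-maximal support, and any pair of
recommendations with distinct conditional beliefs under some `q ∈ P` also has
distinct conditional beliefs under `p`. -/
def MinMixed (P : Set (((∀ j, A j) × Θ) → ℝ)) (p : ((∀ j, A j) × Θ) → ℝ) : Prop :=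
  (∀ q ∈ P, ∀ i : I, ∀ ai : A i, 0 < marg q i ai → 0 < marg p i ai) ∧
  (∀ q ∈ P, ∀ i : I, ∀ ai bi : A i, 0 < marg q i ai → 0 < marg q i bi →
    condBelief q i ai ≠ condBelief q i bi → condBelief p i ai ≠ condBelief p i bi)

section Aux


lemma sum_update_pi (i : I) (c : A i) (h : (∀ j, A j) → ℝ) :
    ∑ a : ∀ j, A j, h (Function.update a i c)
      = (Fintype.card (A i) : ℝ) * ∑ a : ∀ j, A j, if a i = c then h a else 0 := by
  classical
  set e := Equiv.piSplitAt i A with he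
  have key : ∀ (v : A i) (z : ∀ j : {j // j ≠ i}, A j),
      Function.update (e.symm (v, z)) i c = e.symm (c, z) := by
    intro v z
    funext j
    by_cases hj : j = i
    · subst hj; simp [he, Equiv.piSplitAt]
    · simp [he, Function.update_of_ne hj, Equiv.piSplitAt, hj]
  have hei : ∀ (v : A i) (z : ∀ j : {j // j ≠ i}, A j), e.symm (v, z) i = v := by
    intro v z; simp [he, Equiv.piSplitAt]
  rw [← Equiv.sum_comp e.symm (fun a => h (Function.update a i c)),
      ← Equiv.sum_comp e.symm (fun a => if a i = c then h a else 0)]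
  rw [Fintype.sum_prod_type, Fintype.sum_prod_type]
  simp only [key, hei]
  rw [Finset.sum_const, Finset.sum_comm]
  simp [Finset.sum_ite_eq', Finset.card_univ, nsmul_eq_mul]

lemma sum_update_prof (i : I) (c : A i) (h : ((∀ j, A j) × Θ) → ℝ) :
    ∑ x : (∀ j, A j) × Θ, h (Function.update x.1 i c, x.2)
      = (Fintype.card (A i) : ℝ) * ∑ x : (∀ j, A j) × Θ, if x.1 i = c then h x else 0 := by
  rw [Fintype.sum_prod_type, Fintype.sum_prod_type]
  have := sum_update_pi (A := A) i c (fun a => ∑ θ : Θ, h (a, θ))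
  rw [this]
  congr 1
  apply Finset.sum_congr rfl
  intro a _
  by_cases hai : a i = c <;> simp [hai]

lemma marg_nonneg {p : ((∀ j, A j) × Θ) → ℝ} (hp : ∀ x, 0 ≤ p x) (i : I) (ai : A i) :
    0 ≤ marg p i ai := by
  apply Finset.sum_nonneg
  intro x _
  by_cases h : x.1 i = ai <;> simp [h, hp x]

/-- pointwise convex combination -/
noncomputable def mixf (t : ℝ) (r q : ((∀ j, A j) × Θ) → ℝ) : ((∀ j, A j) × Θ) → ℝ :=
  fun x => (1 - t) * r x + t * q x

lemma marg_mix (t : ℝ) (r q : ((∀ j, A j) × Θ) → ℝ) (i : I) (ai : A i) :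
    marg (mixf t r q) i ai = (1 - t) * marg r i ai + t * marg q i ai := by
  unfold marg mixf
  rw [Finset.mul_sum, Finset.mul_sum, ← Finset.sum_add_distrib]
  apply Finset.sum_congr rfl
  intro x _
  by_cases h : x.1 i = ai <;> simp [h]

lemma continuous_marg (i : I) (ai : A i) :
    Continuous (fun p : ((∀ j, A j) × Θ) → ℝ => marg p i ai) := by
  unfold marg
  apply continuous_finset_sum
  intro x _
  by_cases h : x.1 i = ai
  · simpa [h] using continuous_apply x
  · simpa [h] using continuous_const

/-- the cross-multiplied belief-difference functional -/
noncomputable def Fval (i : I) (ai bi : A i) (x : (∀ j, A j) × Θ)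
    (w : ((∀ j, A j) × Θ) → ℝ) : ℝ :=
  w (Function.update x.1 i ai, x.2) * marg w i bi
    - w (Function.update x.1 i bi, x.2) * marg w i ai

lemma continuous_Fval (i : I) (ai bi : A i) (x : (∀ j, A j) × Θ) :
    Continuous (Fval i ai bi x) := by
  unfold Fval
  exact ((continuous_apply _).mul (continuous_marg i bi)).sub
    ((continuous_apply _).mul (continuous_marg i ai))

lemma distinct_iff {r : ((∀ j, A j) × Θ) → ℝ} {i : I} {ai bi : A i}
    (hA : 0 < marg r i ai) (hB : 0 < marg r i bi) :
    condBelief r i ai ≠ condBelief r i bi ↔ ∃ x, Fval i ai bi x r ≠ 0 := by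
  constructor
  · intro hne
    by_contra hc
    push_neg at hc
    apply hne
    funext x
    have := hc x
    unfold Fval at this
    have h2 : r (Function.update x.1 i ai, x.2) * marg r i bi
        = r (Function.update x.1 i bi, x.2) * marg r i ai := by linarith
    unfold condBelief
    rw [div_eq_div_iff hA.ne' hB.ne']
    exact h2
  · rintro ⟨x, hx⟩ heq
    apply hx
    have := congrFun heq x
    unfold condBelief at this
    rw [div_eq_div_iff hA.ne' hB.ne'] at this
    unfold Fval
    linarith

/-- distinctness of beliefs for a triple -/
def Distinct (r : ((∀ j, A j) × Θ) → ℝ) (τ : Σ i : I, A i × A i) : Prop :=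
  0 < marg r τ.1 τ.2.1 ∧ 0 < marg r τ.1 τ.2.2 ∧
    condBelief r τ.1 τ.2.1 ≠ condBelief r τ.1 τ.2.2

lemma isOpen_distinct (τ : Σ i : I, A i × A i) :
    IsOpen {r : ((∀ j, A j) × Θ) → ℝ | Distinct r τ} := by
  obtain ⟨i, ai, bi⟩ := τ
  have : {r : ((∀ j, A j) × Θ) → ℝ | Distinct r ⟨i, (ai, bi)⟩}
      = ({r | 0 < marg r i ai} ∩ {r | 0 < marg r i bi})
        ∩ ⋃ x : (∀ j, A j) × Θ, {r | Fval i ai bi x r ≠ 0} := by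
    ext r
    simp only [Set.mem_setOf_eq, Set.mem_inter_iff, Set.mem_iUnion]
    constructor
    · rintro ⟨h1, h2, h3⟩
      exact ⟨⟨h1, h2⟩, (distinct_iff h1 h2).mp h3⟩
    · rintro ⟨⟨h1, h2⟩, h3⟩
      exact ⟨h1, h2, (distinct_iff h1 h2).mpr h3⟩
  rw [this]
  apply IsOpen.inter
  · exact (isOpen_lt continuous_const (continuous_marg i ai)).inter
      (isOpen_lt continuous_const (continuous_marg i bi))
  · exact isOpen_iUnion fun x =>
      isOpen_ne_fun (continuous_Fval i ai bi x) continuous_const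

/-- unnormalized conditional expected utility -/
noncomputable def Efun (u : ((∀ j, A j) × Θ) → ℝ) (i : I) (ai : A i)
    (w : ((∀ j, A j) × Θ) → ℝ) (d : A i) : ℝ :=
  ∑ x : (∀ j, A j) × Θ, u (Function.update x.1 i d, x.2)
    * w (Function.update x.1 i ai, x.2)

lemma dev_condBelief (u : ((∀ j, A j) × Θ) → ℝ) (i : I) (ai d : A i)
    (w : ((∀ j, A j) × Θ) → ℝ) :
    dev u i d (condBelief w i ai) = Efun u i ai w d / marg w i ai := by
  unfold dev condBelief Efun
  rw [Finset.sum_div]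
  exact Finset.sum_congr rfl fun x _ => by ring

lemma Efun_le_of_obedient {u : ∀ i : I, ((∀ j, A j) × Θ) → ℝ}
    {w : ((∀ j, A j) × Θ) → ℝ} (hob : Obedient u w) (i : I) (ai d : A i) :
    Efun (u i) i ai w d ≤ Efun (u i) i ai w ai := by
  have key : Efun (u i) i ai w ai - Efun (u i) i ai w d
      = (Fintype.card (A i) : ℝ) * ∑ x : (∀ j, A j) × Θ,
          (if x.1 i = ai then (u i x - u i (Function.update x.1 i d, x.2)) * w x else 0) := by
    unfold Efun
    rw [← Finset.sum_sub_distrib]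
    have : ∀ x : (∀ j, A j) × Θ,
        u i (Function.update x.1 i ai, x.2) * w (Function.update x.1 i ai, x.2)
          - u i (Function.update x.1 i d, x.2) * w (Function.update x.1 i ai, x.2)
        = (fun y : (∀ j, A j) × Θ =>
            (u i (Function.update y.1 i ai, y.2) - u i (Function.update y.1 i d, y.2)) * w y)
          (Function.update x.1 i ai, x.2) := by
      intro x
      simp only [Function.update_idem]
      ring
    rw [Finset.sum_congr rfl fun x _ => this x]
    rw [sum_update_prof i ai (fun y : (∀ j, A j) × Θ =>
      (u i (Function.update y.1 i ai, y.2) - u i (Function.update y.1 i d, y.2)) * w y)]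
    congr 1
    apply Finset.sum_congr rfl
    intro x _
    by_cases h : x.1 i = ai
    · simp only [h, if_true]
      have hx1 : Function.update x.1 i ai = x.1 := by
        rw [← h]; exact Function.update_eq_self i x.1
      rw [hx1]
    · simp [h]
  have hcard : (0:ℝ) ≤ (Fintype.card (A i) : ℝ) := by positivity
  have := hob i ai d
  nlinarith [mul_nonneg hcard this]

lemma Efun_mix (u : ((∀ j, A j) × Θ) → ℝ) (i : I) (ai : A i) (l : ℝ)
    (q s : ((∀ j, A j) × Θ) → ℝ) (d : A i) :
    Efun u i ai (fun x => l * q x + (1 - l) * s x) d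
      = l * Efun u i ai q d + (1 - l) * Efun u i ai s d := by
  unfold Efun
  rw [Finset.mul_sum, Finset.mul_sum, ← Finset.sum_add_distrib]
  exact Finset.sum_congr rfl fun x _ => by ring

lemma marg_comb (l : ℝ) (q s : ((∀ j, A j) × Θ) → ℝ) (i : I) (ai : A i) :
    marg (fun x => l * q x + (1 - l) * s x) i ai = l * marg q i ai + (1 - l) * marg s i ai := by
  unfold marg
  rw [Finset.mul_sum, Finset.mul_sum, ← Finset.sum_add_distrib]
  apply Finset.sum_congr rfl
  intro x _
  by_cases h : x.1 i = ai <;> simp [h]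

/-- KEY LEMMA: a best response to a conditional belief of a mixture of BCEs is a
best response to the conditional belief of each component (given positive weight
and positive marginal). -/
lemma keyL {u : ∀ i : I, ((∀ j, A j) × Θ) → ℝ} {q s r : ((∀ j, A j) × Θ) → ℝ}
    (hobq : Obedient u q) (hobs : Obedient u s)
    (hq0 : ∀ x, 0 ≤ q x) (hs0 : ∀ x, 0 ≤ s x)
    {l : ℝ} (hl : 0 < l) (hl1 : l ≤ 1)
    (hr : r = fun x => l * q x + (1 - l) * s x)
    {i : I} {ai : A i} (hmq : 0 < marg q i ai) {ci : A i}
    (hci : ci ∈ BRset (u i) i (condBelief r i ai)) :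
    ci ∈ BRset (u i) i (condBelief q i ai) := by
  have hmr : 0 < marg r i ai := by
    rw [hr, marg_comb]
    have := marg_nonneg hs0 i ai
    nlinarith
  have hEr : ∀ d, Efun (u i) i ai r d ≤ Efun (u i) i ai r ci := by
    intro d
    have := hci d
    rw [dev_condBelief, dev_condBelief] at this
    exact (div_le_div_iff_of_pos_right hmr).mp this
  have hErai := hEr ai
  rw [hr, Efun_mix, Efun_mix] at hErai
  have hq1 : Efun (u i) i ai q ci ≤ Efun (u i) i ai q ai := Efun_le_of_obedient hobq i ai ci
  have hs1 : Efun (u i) i ai s ci ≤ Efun (u i) i ai s ai := Efun_le_of_obedient hobs i ai ci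
  have hqeq : Efun (u i) i ai q ci = Efun (u i) i ai q ai := by nlinarith
  intro d
  rw [dev_condBelief, dev_condBelief]
  have hd : Efun (u i) i ai q d ≤ Efun (u i) i ai q ci := by
    rw [hqeq]; exact Efun_le_of_obedient hobq i ai d
  exact (div_le_div_iff_of_pos_right hmq).mpr hd

lemma dist_mixf {t : ℝ} (ht : 0 ≤ t) (r q : ((∀ j, A j) × Θ) → ℝ) :
    dist (mixf t r q) r ≤ t * dist q r := by
  rw [dist_pi_le_iff (by positivity)]
  intro x
  have h1 : dist (q x) (r x) ≤ dist q r := dist_le_pi_dist q r x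
  rw [Real.dist_eq]
  unfold mixf
  have : (1 - t) * r x + t * q x - r x = t * (q x - r x) := by ring
  rw [this, abs_mul, abs_of_nonneg ht]
  have : |q x - r x| = dist (q x) (r x) := (Real.dist_eq _ _).symm
  rw [this]
  exact mul_le_mul_of_nonneg_left h1 ht

section comp
variable (P : Set (((∀ j, A j) × Θ) → ℝ))

/-- `w` is a component (with positive weight) of `r` relative to `P`. -/
def Comp (w r : ((∀ j, A j) × Θ) → ℝ) : Prop :=
  ∃ l s, 0 < l ∧ l ≤ 1 ∧ s ∈ P ∧ r = fun x => l * w x + (1 - l) * s x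

variable {P}

lemma comp_self {r : ((∀ j, A j) × Θ) → ℝ} (hr : r ∈ P) : Comp P r r :=
  ⟨1, r, one_pos, le_refl 1, hr, by funext x; ring⟩

lemma mixf_mem (hPcv : Convex ℝ P) {r q : ((∀ j, A j) × Θ) → ℝ} (hr : r ∈ P) (hq : q ∈ P)
    {t : ℝ} (ht0 : 0 ≤ t) (ht1 : t ≤ 1) : mixf t r q ∈ P := by
  have heq : mixf t r q = (1 - t) • r + t • q := by
    funext x; simp [mixf]
  rw [heq]
  exact hPcv hr hq (by linarith : (0:ℝ) ≤ 1 - t) ht0 (by ring)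

lemma comp_mixf_right (hq : q ∈ P) {r : ((∀ j, A j) × Θ) → ℝ} {t : ℝ} (ht0 : 0 ≤ t)
    (ht1 : t < 1) : Comp P r (mixf t r q) :=
  ⟨1 - t, q, by linarith, by linarith, hq, by funext x; unfold mixf; ring⟩

lemma comp_mixf_left (hr : r ∈ P) {q : ((∀ j, A j) × Θ) → ℝ} {t : ℝ} (ht0 : 0 < t)
    (ht1 : t ≤ 1) : Comp P q (mixf t r q) :=
  ⟨t, r, ht0, ht1, hr, by funext x; unfold mixf; ring⟩

lemma comp_trans (hPcv : Convex ℝ P) {w r r' : ((∀ j, A j) × Θ) → ℝ}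
    (h1 : Comp P w r) (h2 : Comp P r r') : Comp P w r' := by
  obtain ⟨l1, s1, hl1, hl1', hs1, hr⟩ := h1
  obtain ⟨l2, s2, hl2, hl2', hs2, hr'⟩ := h2
  by_cases hone : l1 * l2 = 1
  · have e1 : l1 = 1 := by nlinarith
    have e2 : l2 = 1 := by nlinarith
    refine ⟨1, s1, one_pos, le_refl 1, hs1, ?_⟩
    subst hr'
    funext x
    rw [hr]
    simp [e1, e2]
  · have hm : 0 < 1 - l1 * l2 := by
      rcases lt_or_eq_of_le (mul_le_one₀ hl1' (le_of_lt hl2) hl2') with h | h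
      · linarith
      · exact absurd h hone
    set α := l2 * (1 - l1) / (1 - l1 * l2) with hα
    set β := (1 - l2) / (1 - l1 * l2) with hβ
    have hα0 : 0 ≤ α := by apply div_nonneg; nlinarith; linarith
    have hβ0 : 0 ≤ β := by apply div_nonneg; linarith; linarith
    have hαβ : α + β = 1 := by
      rw [hα, hβ, ← add_div, div_eq_one_iff_eq hm.ne']
      ring
    have hmem := hPcv hs1 hs2 hα0 hβ0 hαβ
    refine ⟨l1 * l2, α • s1 + β • s2, by positivity, by nlinarith, hmem, ?_⟩
    funext x
    rw [hr', hr]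
    simp only [Pi.add_apply, Pi.smul_apply, smul_eq_mul, hα, hβ]
    have hinv : (1 - l1 * l2) * (1 - l1 * l2)⁻¹ = 1 := mul_inv_cancel₀ hm.ne'
    simp only [div_eq_mul_inv]
    linear_combination (-(l2 * (1 - l1) * s1 x + (1 - l2) * s2 x)) * hinv

lemma marg_pos_of_comp {w r : ((∀ j, A j) × Θ) → ℝ} (h : Comp P w r)
    (hP0 : ∀ p ∈ P, ∀ x, 0 ≤ p x) {i : I} {ai : A i} (hw : 0 < marg w i ai) :
    0 < marg r i ai := by
  obtain ⟨l, s, hl, hl1, hs, hr⟩ := h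
  rw [hr, marg_comb]
  have := marg_nonneg (hP0 s hs) i ai
  nlinarith

end comp

lemma quad_nonzero {a b c : ℝ} (h : a + b + c ≠ 0) {δ : ℝ} (hδ : 0 < δ) :
    ∃ t, 0 < t ∧ t < δ ∧ a * t ^ 2 + b * t + c ≠ 0 := by
  by_contra hc
  push_neg at hc
  have e1 := hc (δ/2) (by positivity) (by linarith)
  have e2 := hc (δ/3) (by positivity) (by linarith)
  have e3 := hc (δ/4) (by positivity) (by linarith)
  apply h
  have h12 : a * (δ/2 + δ/3) + b = 0 := by
    have hne : δ/2 - δ/3 ≠ 0 := by intro h0; nlinarith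
    have hmul : (δ/2 - δ/3) * (a * (δ/2 + δ/3) + b) = 0 := by linear_combination e1 - e2
    exact (mul_eq_zero.mp hmul).resolve_left hne
  have h13 : a * (δ/2 + δ/4) + b = 0 := by
    have hne : δ/2 - δ/4 ≠ 0 := by intro h0; nlinarith
    have hmul : (δ/2 - δ/4) * (a * (δ/2 + δ/4) + b) = 0 := by linear_combination e1 - e3
    exact (mul_eq_zero.mp hmul).resolve_left hne
  have ha : a = 0 := by
    have hne : δ/3 - δ/4 ≠ 0 := by intro h0; nlinarith
    have hmul : (δ/3 - δ/4) * a = 0 := by linear_combination h12 - h13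
    exact (mul_eq_zero.mp hmul).resolve_left hne
  have hb : b = 0 := by linear_combination h12 - (δ/2 + δ/3) * ha
  have hcc : c = 0 := by linear_combination e1 - (δ/2)^2 * ha - (δ/2) * hb
  rw [ha, hb, hcc]; ring

lemma Fval_mixf (i : I) (ai bi : A i) (x : (∀ j, A j) × Θ)
    (r q : ((∀ j, A j) × Θ) → ℝ) (t : ℝ) :
    Fval i ai bi x (mixf t r q)
      = ((q (Function.update x.1 i ai, x.2) - r (Function.update x.1 i ai, x.2))
          * (marg q i bi - marg r i bi)
         - (q (Function.update x.1 i bi, x.2) - r (Function.update x.1 i bi, x.2))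
          * (marg q i ai - marg r i ai)) * t ^ 2
        + (r (Function.update x.1 i ai, x.2) * (marg q i bi - marg r i bi)
            + (q (Function.update x.1 i ai, x.2) - r (Function.update x.1 i ai, x.2))
              * marg r i bi
            - r (Function.update x.1 i bi, x.2) * (marg q i ai - marg r i ai)
            - (q (Function.update x.1 i bi, x.2) - r (Function.update x.1 i bi, x.2))
              * marg r i ai) * t
        + (r (Function.update x.1 i ai, x.2) * marg r i bi
            - r (Function.update x.1 i bi, x.2) * marg r i ai) := by
  unfold Fval
  rw [marg_mix, marg_mix]
  unfold mixf
  ring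

lemma mixf_one (r q : ((∀ j, A j) × Θ) → ℝ) : mixf 1 r q = q := by
  funext x; unfold mixf; ring

lemma small_mul_lt {t D ε : ℝ} (hD : 0 ≤ D) (hε : 0 < ε) (ht0 : 0 < t)
    (ht : t ≤ ε / (2 * (D + 1))) : t * D < ε / 2 := by
  have h2 : t * (2 * (D + 1)) ≤ ε := (le_div_iff₀ (by positivity)).mp ht
  nlinarith

lemma mixA {P : Set (((∀ j, A j) × Θ) → ℝ)} (hPcv : Convex ℝ P) :
    ∀ (L : List (((∀ j, A j) × Θ) → ℝ)), (∀ w ∈ L, w ∈ P) →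
    ∀ r, r ∈ P → ∀ ε : ℝ, 0 < ε →
    ∃ r', r' ∈ P ∧ dist r' r < ε ∧ Comp P r r' ∧ ∀ w ∈ L, Comp P w r' := by
  intro L
  induction L with
  | nil =>
    intro _ r hr ε hε
    exact ⟨r, hr, by simpa using hε, comp_self hr, by simp⟩
  | cons w L ih =>
    intro hL r hr ε hε
    set D := dist w r with hDdef
    have hD : 0 ≤ D := dist_nonneg
    set t := min (1/2 : ℝ) (ε / (2 * (D + 1))) with htdef
    have ht0 : 0 < t := lt_min (by norm_num) (by positivity)
    have ht1 : t < 1 := lt_of_le_of_lt (min_le_left _ _) (by norm_num)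
    have hwP : w ∈ P := hL w List.mem_cons_self
    set r1 := mixf t r w with hr1def
    have hr1P : r1 ∈ P := mixf_mem hPcv hr hwP ht0.le ht1.le
    have hd1 : dist r1 r < ε / 2 := by
      calc dist r1 r ≤ t * D := dist_mixf ht0.le r w
        _ < ε / 2 := small_mul_lt hD hε ht0 (min_le_right _ _)
    obtain ⟨r', hr'P, hd2, hcomp, hall⟩ :=
      ih (fun v hv => hL v (List.mem_cons_of_mem _ hv)) r1 hr1P (ε/2) (by positivity)
    refine ⟨r', hr'P, ?_, ?_, ?_⟩
    · calc dist r' r ≤ dist r' r1 + dist r1 r := dist_triangle _ _ _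
        _ < ε := by linarith
    · exact comp_trans hPcv (comp_mixf_right hwP ht0.le ht1) hcomp
    · intro v hv
      rcases List.mem_cons.mp hv with h | h
      · subst h; exact comp_trans hPcv (comp_mixf_left hr ht0 ht1.le) hcomp
      · exact hall v h

lemma mixB {P : Set (((∀ j, A j) × Θ) → ℝ)} (hPcv : Convex ℝ P)
    (hP0 : ∀ p ∈ P, ∀ x, 0 ≤ p x) :
    ∀ (L : List (Σ i : I, A i × A i)), (∀ τ ∈ L, ∃ q ∈ P, Distinct q τ) →
    ∀ r, r ∈ P → ∀ U : Set (((∀ j, A j) × Θ) → ℝ), IsOpen U → r ∈ U →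
    ∀ ε : ℝ, 0 < ε →
    ∃ r', r' ∈ P ∧ r' ∈ U ∧ dist r' r < ε ∧ Comp P r r' ∧ ∀ τ ∈ L, Distinct r' τ := by
  intro L
  induction L with
  | nil =>
    intro _ r hr U hU hrU ε hε
    exact ⟨r, hr, hrU, by simpa using hε, comp_self hr, by simp⟩
  | cons τ L ih =>
    intro hL r hr U hU hrU ε hε
    obtain ⟨i, ai, bi⟩ := τ
    obtain ⟨q, hqP, hq1, hq2, hq3⟩ := hL ⟨i, (ai, bi)⟩ List.mem_cons_self
    obtain ⟨x0, hx0⟩ := (distinct_iff hq1 hq2).mp hq3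
    obtain ⟨ρ, hρ0, hball⟩ := Metric.isOpen_iff.mp hU r hrU
    set D := dist q r with hDdef
    have hD : 0 ≤ D := dist_nonneg
    set δ := min (1/2 : ℝ) (min (ρ / (2 * (D + 1))) (ε / (2 * (D + 1)))) with hδdef
    have hδ0 : 0 < δ := lt_min (by norm_num) (lt_min (by positivity) (by positivity))
    -- quadratic coefficients
    set av := (q (Function.update x0.1 i ai, x0.2) - r (Function.update x0.1 i ai, x0.2))
          * (marg q i bi - marg r i bi)
         - (q (Function.update x0.1 i bi, x0.2) - r (Function.update x0.1 i bi, x0.2))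
          * (marg q i ai - marg r i ai) with hav
    set bv := r (Function.update x0.1 i ai, x0.2) * (marg q i bi - marg r i bi)
            + (q (Function.update x0.1 i ai, x0.2) - r (Function.update x0.1 i ai, x0.2))
              * marg r i bi
            - r (Function.update x0.1 i bi, x0.2) * (marg q i ai - marg r i ai)
            - (q (Function.update x0.1 i bi, x0.2) - r (Function.update x0.1 i bi, x0.2))
              * marg r i ai with hbv
    set cv := r (Function.update x0.1 i ai, x0.2) * marg r i bi
            - r (Function.update x0.1 i bi, x0.2) * marg r i ai with hcv
    have hFt : ∀ t : ℝ, Fval i ai bi x0 (mixf t r q) = av * t ^ 2 + bv * t + cv :=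
      fun t => Fval_mixf i ai bi x0 r q t
    have hsum : av + bv + cv ≠ 0 := by
      have h1 := hFt 1
      rw [mixf_one] at h1
      intro h0
      apply hx0
      rw [h1]; linarith [h0]
    obtain ⟨t, ht0, htδ, htF⟩ := quad_nonzero hsum hδ0
    have ht12 : t < 1/2 := lt_of_lt_of_le htδ (min_le_left _ _)
    have ht1 : t < 1 := by linarith
    have htρ : t ≤ ρ / (2 * (D + 1)) :=
      le_trans htδ.le ((min_le_right _ _).trans (min_le_left _ _))
    have htε : t ≤ ε / (2 * (D + 1)) :=
      le_trans htδ.le ((min_le_right _ _).trans (min_le_right _ _))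
    set r1 := mixf t r q with hr1def
    have hr1P : r1 ∈ P := mixf_mem hPcv hr hqP ht0.le ht1.le
    have hdr1 : dist r1 r ≤ t * D := dist_mixf ht0.le r q
    have hd1ρ : dist r1 r < ρ := lt_of_le_of_lt hdr1
      (lt_of_lt_of_le (small_mul_lt hD hρ0 ht0 htρ) (by linarith))
    have hd1ε : dist r1 r < ε / 2 := lt_of_le_of_lt hdr1 (small_mul_lt hD hε ht0 htε)
    have hr1U : r1 ∈ U := hball (Metric.mem_ball.mpr hd1ρ)
    have hmargs : 0 < marg r1 i ai ∧ 0 < marg r1 i bi := by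
      constructor <;>
      · rw [hr1def, marg_mix]
        have h1 := marg_nonneg (hP0 r hr) i ai
        have h2 := marg_nonneg (hP0 r hr) i bi
        nlinarith
    have hr1D : Distinct r1 ⟨i, (ai, bi)⟩ := by
      refine ⟨hmargs.1, hmargs.2, ?_⟩
      rw [distinct_iff hmargs.1 hmargs.2]
      exact ⟨x0, by rw [hr1def, hFt t]; exact htF⟩
    obtain ⟨r', hr'P, hr'U, hd2, hcomp, hall⟩ :=
      ih (fun v hv => hL v (List.mem_cons_of_mem _ hv)) r1 hr1P
        (U ∩ {w | Distinct w ⟨i, (ai, bi)⟩}) (hU.inter (isOpen_distinct _))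
        ⟨hr1U, hr1D⟩ (ε/2) (by positivity)
    refine ⟨r', hr'P, hr'U.1, ?_, ?_, ?_⟩
    · calc dist r' r ≤ dist r' r1 + dist r1 r := dist_triangle _ _ _
        _ < ε := by linarith
    · exact comp_trans hPcv (comp_mixf_right hqP ht0.le ht1) hcomp
    · intro v hv
      rcases List.mem_cons.mp hv with h | h
      · subst h; exact hr'U.2
      · exact hall v h

lemma construction
    (u : ∀ i : I, ((∀ j, A j) × Θ) → ℝ)
    (P : Set (((∀ j, A j) × Θ) → ℝ))
    (hPcv : Convex ℝ P)
    (hP0 : ∀ p ∈ P, ∀ x, 0 ≤ p x)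
    (hPob : ∀ p ∈ P, Obedient u p)
    (Hiii : ∀ p ∈ P, ∀ i : I, ∀ ai bi : A i,
          0 < marg p i ai → 0 < marg p i bi →
          condBelief p i ai ≠ condBelief p i bi →
          ∀ ci : A i,
            ¬ ((∀ q ∈ P, 0 < marg q i ai → ci ∈ BRset (u i) i (condBelief q i ai)) ∧
               (∀ q ∈ P, 0 < marg q i bi → ci ∈ BRset (u i) i (condBelief q i bi))))
    {p : ((∀ j, A j) × Θ) → ℝ} (hp : p ∈ P) {ε : ℝ} (hε : 0 < ε) :
    ∃ r ∈ P, dist r p < ε ∧ Separated u r ∧ MinMixed P r := by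
  classical
  -- support witnesses
  let w1 : (Σ i : I, A i) → ((∀ j, A j) × Θ) → ℝ := fun τ =>
    if h : ∃ q ∈ P, 0 < marg q τ.1 τ.2 then h.choose else p
  have hw1P : ∀ τ, w1 τ ∈ P := by
    intro τ
    by_cases h : ∃ q ∈ P, 0 < marg q τ.1 τ.2
    · simp only [w1, dif_pos h]; exact h.choose_spec.1
    · simp only [w1, dif_neg h]; exact hp
  have hw1spec : ∀ τ : Σ i : I, A i, (∃ q ∈ P, 0 < marg q τ.1 τ.2) →
      0 < marg (w1 τ) τ.1 τ.2 := by
    intro τ h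
    simp only [w1, dif_pos h]
    exact h.choose_spec.2
  -- best-response witnesses
  let w2 : (Σ i : I, A i × A i) → ((∀ j, A j) × Θ) → ℝ := fun τ =>
    if h : ∃ q ∈ P, 0 < marg q τ.1 τ.2.1 ∧
        τ.2.2 ∉ BRset (u τ.1) τ.1 (condBelief q τ.1 τ.2.1) then h.choose else p
  have hw2P : ∀ τ, w2 τ ∈ P := by
    intro τ
    by_cases h : ∃ q ∈ P, 0 < marg q τ.1 τ.2.1 ∧
        τ.2.2 ∉ BRset (u τ.1) τ.1 (condBelief q τ.1 τ.2.1)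
    · simp only [w2, dif_pos h]; exact h.choose_spec.1
    · simp only [w2, dif_neg h]; exact hp
  have hw2spec : ∀ τ : Σ i : I, A i × A i, (∃ q ∈ P, 0 < marg q τ.1 τ.2.1 ∧
        τ.2.2 ∉ BRset (u τ.1) τ.1 (condBelief q τ.1 τ.2.1)) →
      0 < marg (w2 τ) τ.1 τ.2.1 ∧
        τ.2.2 ∉ BRset (u τ.1) τ.1 (condBelief (w2 τ) τ.1 τ.2.1) := by
    intro τ h
    simp only [w2, dif_pos h]
    exact h.choose_spec.2
  -- phase A
  set LA := (((univ : Finset (Σ i : I, A i)).toList.map w1) ++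
    ((univ : Finset (Σ i : I, A i × A i)).toList.map w2)) with hLAdef
  have hLA : ∀ w ∈ LA, w ∈ P := by
    intro w hw
    rcases List.mem_append.mp hw with h | h
    · obtain ⟨τ, _, rfl⟩ := List.mem_map.mp h; exact hw1P τ
    · obtain ⟨τ, _, rfl⟩ := List.mem_map.mp h; exact hw2P τ
  obtain ⟨r1, hr1P, hd1, _, hcomp1⟩ := mixA hPcv LA hLA p hp (ε/2) (by positivity)
  -- phase B
  set LB := ((univ : Finset (Σ i : I, A i × A i)).filter
    (fun τ => ∃ q ∈ P, Distinct q τ)).toList with hLBdef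
  have hLB : ∀ τ ∈ LB, ∃ q ∈ P, Distinct q τ := by
    intro τ hτ
    exact (Finset.mem_filter.mp (Finset.mem_toList.mp hτ)).2
  obtain ⟨r2, hr2P, _, hd2, hcomp2, hdist⟩ :=
    mixB hPcv hP0 LB hLB r1 hr1P Set.univ isOpen_univ trivial (ε/2) (by positivity)
  have hcompw : ∀ w ∈ LA, Comp P w r2 := fun w hw =>
    comp_trans hPcv (hcomp1 w hw) hcomp2
  have hdtot : dist r2 p < ε := by
    calc dist r2 p ≤ dist r2 r1 + dist r1 p := dist_triangle _ _ _
      _ < ε := by linarith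
  -- minimally mixed
  have hsupp : ∀ q ∈ P, ∀ i : I, ∀ ai : A i, 0 < marg q i ai → 0 < marg r2 i ai := by
    intro q hq i ai hm
    have hex : ∃ q ∈ P, 0 < marg q i ai := ⟨q, hq, hm⟩
    have h1 : 0 < marg (w1 ⟨i, ai⟩) i ai := hw1spec ⟨i, ai⟩ hex
    have hmem : w1 ⟨i, ai⟩ ∈ LA := by
      rw [hLAdef]
      exact List.mem_append.mpr (Or.inl (List.mem_map.mpr
        ⟨⟨i, ai⟩, Finset.mem_toList.mpr (Finset.mem_univ _), rfl⟩))
    exact marg_pos_of_comp (hcompw _ hmem) hP0 h1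
  have hdis : ∀ q ∈ P, ∀ i : I, ∀ ai bi : A i, 0 < marg q i ai → 0 < marg q i bi →
      condBelief q i ai ≠ condBelief q i bi →
      condBelief r2 i ai ≠ condBelief r2 i bi := by
    intro q hq i ai bi h1 h2 h3
    have hmem : (⟨i, (ai, bi)⟩ : Σ i : I, A i × A i) ∈ LB := by
      rw [hLBdef]
      exact Finset.mem_toList.mpr (Finset.mem_filter.mpr
        ⟨Finset.mem_univ _, ⟨q, hq, h1, h2, h3⟩⟩)
    exact (hdist _ hmem).2.2
  -- separation
  have hsep : Separated u r2 := by
    intro i ai bi hma hmb hne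
    rw [Set.eq_empty_iff_forall_notMem]
    rintro ci ⟨hciA, hciB⟩
    have hmain := Hiii r2 hr2P i ai bi hma hmb hne ci
    rw [not_and_or] at hmain
    rcases hmain with h | h
    · push_neg at h
      obtain ⟨q, hqP, hqm, hqn⟩ := h
      have hex : ∃ q ∈ P, 0 < marg q i ai ∧
          ci ∉ BRset (u i) i (condBelief q i ai) := ⟨q, hqP, hqm, hqn⟩
      obtain ⟨hwm, hwn⟩ := hw2spec ⟨i, (ai, ci)⟩ hex
      have hmem : w2 ⟨i, (ai, ci)⟩ ∈ LA := by
        rw [hLAdef]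
        exact List.mem_append.mpr (Or.inr (List.mem_map.mpr
          ⟨⟨i, (ai, ci)⟩, Finset.mem_toList.mpr (Finset.mem_univ _), rfl⟩))
      obtain ⟨l, s, hl, hl1, hsP, hreq⟩ := hcompw _ hmem
      exact hwn (keyL (hPob _ (hw2P _)) (hPob _ hsP) (hP0 _ (hw2P _)) (hP0 _ hsP)
        hl hl1 hreq hwm hciA)
    · push_neg at h
      obtain ⟨q, hqP, hqm, hqn⟩ := h
      have hex : ∃ q ∈ P, 0 < marg q i bi ∧
          ci ∉ BRset (u i) i (condBelief q i bi) := ⟨q, hqP, hqm, hqn⟩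
      obtain ⟨hwm, hwn⟩ := hw2spec ⟨i, (bi, ci)⟩ hex
      have hmem : w2 ⟨i, (bi, ci)⟩ ∈ LA := by
        rw [hLAdef]
        exact List.mem_append.mpr (Or.inr (List.mem_map.mpr
          ⟨⟨i, (bi, ci)⟩, Finset.mem_toList.mpr (Finset.mem_univ _), rfl⟩))
      obtain ⟨l, s, hl, hl1, hsP, hreq⟩ := hcompw _ hmem
      exact hwn (keyL (hPob _ (hw2P _)) (hPob _ hsP) (hP0 _ (hw2P _)) (hP0 _ hsP)
        hl hl1 hreq hwm hciB)
  exact ⟨r2, hr2P, hdtot, hsep, hsupp, hdis⟩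
end Aux

/-- for a non-empty closed convex set `P` of BCEs, the following
are equivalent: (i) the separated BCEs in `P` are dense in `P`; (ii) there is
a `P`-minimally mixed separated BCE in `P`; (iii) recommendations with
distinct conditional beliefs under some `p ∈ P` have disjoint sets of
`P`-jeopardizing actions. -/


theorem stmt9 {I : Type} [Fintype I] [DecidableEq I]
    {A : I → Type} [∀ i, Fintype (A i)] [∀ i, DecidableEq (A i)]
    {Θ : Type} [Fintype Θ]
    (π : Θ → ℝ) (hπpos : ∀ θ, 0 < π θ) (hπ1 : ∑ θ, π θ = 1)
    (u : ∀ i : I, ((∀ j, A j) × Θ) → ℝ)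
    (P : Set (((∀ j, A j) × Θ) → ℝ))
    (hPne : P.Nonempty) (hPcl : IsClosed P) (hPcv : Convex ℝ P)
    (hPbce : ∀ p ∈ P, IsOutcome π p ∧ Obedient u p) :
    (Dense {x : P | Separated u x.1} ↔
        ∃ p ∈ P, Separated u p ∧ MinMixed P p) ∧
    ((∃ p ∈ P, Separated u p ∧ MinMixed P p) ↔
        ∀ p ∈ P, ∀ i : I, ∀ ai bi : A i,
          0 < marg p i ai → 0 < marg p i bi →
          condBelief p i ai ≠ condBelief p i bi →
          ∀ ci : A i,
            ¬ ((∀ q ∈ P, 0 < marg q i ai → ci ∈ BRset (u i) i (condBelief q i ai)) ∧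
               (∀ q ∈ P, 0 < marg q i bi → ci ∈ BRset (u i) i (condBelief q i bi)))) := by
  have hP0 : ∀ p ∈ P, ∀ x, 0 ≤ p x := fun p hp => (hPbce p hp).1.1
  have hPob : ∀ p ∈ P, Obedient u p := fun p hp => (hPbce p hp).2
  -- (ii) → (iii)
  have iii_of_ii : (∃ p ∈ P, Separated u p ∧ MinMixed P p) →
      ∀ p ∈ P, ∀ i : I, ∀ ai bi : A i,
          0 < marg p i ai → 0 < marg p i bi →
          condBelief p i ai ≠ condBelief p i bi →
          ∀ ci : A i,
            ¬ ((∀ q ∈ P, 0 < marg q i ai → ci ∈ BRset (u i) i (condBelief q i ai)) ∧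
               (∀ q ∈ P, 0 < marg q i bi → ci ∈ BRset (u i) i (condBelief q i bi))) := by
    rintro ⟨p0, hp0P, hsep, hmm⟩ q hqP i ai bi hma hmb hne ci ⟨hA, hB⟩
    have h1 : 0 < marg p0 i ai := hmm.1 q hqP i ai hma
    have h2 : 0 < marg p0 i bi := hmm.1 q hqP i bi hmb
    have h3 : condBelief p0 i ai ≠ condBelief p0 i bi := hmm.2 q hqP i ai bi hma hmb hne
    have hdisj := hsep i ai bi h1 h2 h3
    have : ci ∈ BRset (u i) i (condBelief p0 i ai) ∩ BRset (u i) i (condBelief p0 i bi) :=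
      ⟨hA p0 hp0P h1, hB p0 hp0P h2⟩
    rw [hdisj] at this
    exact this
  -- (i) → (iii)
  have iii_of_i : Dense {x : P | Separated u x.1} →
      ∀ p ∈ P, ∀ i : I, ∀ ai bi : A i,
          0 < marg p i ai → 0 < marg p i bi →
          condBelief p i ai ≠ condBelief p i bi →
          ∀ ci : A i,
            ¬ ((∀ q ∈ P, 0 < marg q i ai → ci ∈ BRset (u i) i (condBelief q i ai)) ∧
               (∀ q ∈ P, 0 < marg q i bi → ci ∈ BRset (u i) i (condBelief q i bi))) := by
    rintro hD p hpP i ai bi hma hmb hne ci ⟨hA, hB⟩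
    have hDp : Distinct p ⟨i, (ai, bi)⟩ := ⟨hma, hmb, hne⟩
    obtain ⟨ρ, hρ, hball⟩ := Metric.isOpen_iff.mp (isOpen_distinct ⟨i, (ai, bi)⟩) p hDp
    obtain ⟨y, hy1, hy2⟩ := Metric.dense_iff.mp hD ⟨p, hpP⟩ ρ hρ
    have hyd : Distinct y.1 ⟨i, (ai, bi)⟩ := by
      apply hball
      rw [Metric.mem_ball]
      exact Metric.mem_ball.mp hy1
    have hdisj := hy2 i ai bi hyd.1 hyd.2.1 hyd.2.2
    have : ci ∈ BRset (u i) i (condBelief y.1 i ai) ∩ BRset (u i) i (condBelief y.1 i bi) :=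
      ⟨hA y.1 y.2 hyd.1, hB y.1 y.2 hyd.2.1⟩
    rw [hdisj] at this
    exact this
  -- (iii) → (ii)
  have ii_of_iii : (∀ p ∈ P, ∀ i : I, ∀ ai bi : A i,
          0 < marg p i ai → 0 < marg p i bi →
          condBelief p i ai ≠ condBelief p i bi →
          ∀ ci : A i,
            ¬ ((∀ q ∈ P, 0 < marg q i ai → ci ∈ BRset (u i) i (condBelief q i ai)) ∧
               (∀ q ∈ P, 0 < marg q i bi → ci ∈ BRset (u i) i (condBelief q i bi)))) →
      ∃ p ∈ P, Separated u p ∧ MinMixed P p := by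
    intro Hiii
    obtain ⟨p, hp⟩ := hPne
    obtain ⟨r, hrP, _, hsep, hmm⟩ := construction u P hPcv hP0 hPob Hiii hp one_pos
    exact ⟨r, hrP, hsep, hmm⟩
  -- (iii) → (i)
  have i_of_iii : (∀ p ∈ P, ∀ i : I, ∀ ai bi : A i,
          0 < marg p i ai → 0 < marg p i bi →
          condBelief p i ai ≠ condBelief p i bi →
          ∀ ci : A i,
            ¬ ((∀ q ∈ P, 0 < marg q i ai → ci ∈ BRset (u i) i (condBelief q i ai)) ∧
               (∀ q ∈ P, 0 < marg q i bi → ci ∈ BRset (u i) i (condBelief q i bi)))) →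
      Dense {x : P | Separated u x.1} := by
    intro Hiii
    rw [Metric.dense_iff]
    intro x ε hε
    obtain ⟨r, hrP, hd, hsep, _⟩ := construction u P hPcv hP0 hPob Hiii x.2 hε
    refine ⟨⟨r, hrP⟩, ?_, hsep⟩
    rw [Metric.mem_ball]
    exact hd
  exact ⟨⟨fun h => ii_of_iii (iii_of_i h), fun h => i_of_iii (iii_of_ii h)⟩,
    ⟨iii_of_ii, ii_of_iii⟩⟩
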